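/- Let k₀ ∈ L²([0,1]²) and let L₀ be the associated integral operator on L²([0,1]); assume L₀ is integral-preserving and satisfies the mixing condition (A1), and let f₀ be the unique fixed point of L₀ with ∫ f₀ dm = 1. Then Id − L₀* maps span{f₀}^⊥ := {h ∈ L² : ⟨h, f₀⟩ = 0} bijectively onto itself with bounded inverse: for every c ∈ L² with ⟨c, f₀⟩ = 0 there exists a unique w ∈ L² with ⟨w, f₀⟩ = 0 and w − L₀* w = c, and there exists M ≥ 0 such that ‖w‖₂ ≤ M ‖c‖₂ for every such pair (c, w). Here L₀* denotes the Hilbert adjoint of L₀. -/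

import Mathlib

open MeasureTheory
open scoped RealInnerProductSpace

set_option maxHeartbeats 1000000
set_option synthInstance.maxHeartbeats 400000

/-- Lebesgue measure restricted to the unit interval `[0,1]`. -/
noncomputable def μ01 : Measure ℝ := volume.restrict (Set.Icc (0 : ℝ) 1)

/-- Two-dimensional Lebesgue measure restricted to the unit square `[0,1]²`. -/
noncomputable def ν01 : Measure (ℝ × ℝ) := μ01.prod μ01

instance : IsFiniteMeasure μ01 := by
  constructor
  rw [μ01, Measure.restrict_apply_univ]
  simp [Real.volume_Icc]

/-- If the squared norms of `T` on a Hilbert basis have partial sums bounded by `D`,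
then `‖T g‖ ≤ √D * ‖g‖`. -/
lemma opnorm_le_of_basis_sq_sum {ι E : Type*} [NormedAddCommGroup E]
    [InnerProductSpace ℝ E] [CompleteSpace E]
    (b : HilbertBasis ι ℝ E) (T : E →L[ℝ] E) {D : ℝ}
    (h : ∀ s : Finset ι, ∑ j ∈ s, ‖T (b j)‖ ^ 2 ≤ D) (g : E) :
    ‖T g‖ ≤ Real.sqrt D * ‖g‖ := by
  have hPg : HasSum (fun j => ⟪b j, g⟫ ^ 2) (‖g‖ ^ 2) := by
    have := b.hasSum_inner_mul_inner g g
    rw [real_inner_self_eq_norm_sq] at this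
    have e : (fun j => ⟪b j, g⟫ ^ 2) = fun i => ⟪g, b i⟫ * ⟪b i, g⟫ := by
      funext j
      rw [sq, real_inner_comm (b j) g]
    rw [e]; exact this
  have hbessel : ∀ s : Finset ι, ∑ j ∈ s, ⟪b j, g⟫ ^ 2 ≤ ‖g‖ ^ 2 :=
    fun s => sum_le_hasSum s (fun i _ => sq_nonneg _) hPg
  have hpartial : ∀ s : Finset ι, ∑ j ∈ s, ‖⟪b j, g⟫ • T (b j)‖ ≤ Real.sqrt D * ‖g‖ := by
    intro s
    have h1 : ∑ j ∈ s, ‖⟪b j, g⟫ • T (b j)‖ = ∑ j ∈ s, |⟪b j, g⟫| * ‖T (b j)‖ := by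
      refine Finset.sum_congr rfl fun j _ => ?_
      rw [norm_smul, Real.norm_eq_abs]
    have hcs := Finset.sum_mul_sq_le_sq_mul_sq s (fun j => |⟪b j, g⟫|) (fun j => ‖T (b j)‖)
    simp only [sq_abs] at hcs
    have h2 : (∑ j ∈ s, |⟪b j, g⟫| * ‖T (b j)‖) ^ 2 ≤ (‖g‖ ^ 2) * D := by
      refine hcs.trans ?_
      exact mul_le_mul (hbessel s) (h s) (Finset.sum_nonneg fun j _ => sq_nonneg _)
        (sq_nonneg _)
    have h3 : ∑ j ∈ s, |⟪b j, g⟫| * ‖T (b j)‖ ≤ Real.sqrt ((‖g‖ ^ 2) * D) := by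
      calc ∑ j ∈ s, |⟪b j, g⟫| * ‖T (b j)‖
          = Real.sqrt ((∑ j ∈ s, |⟪b j, g⟫| * ‖T (b j)‖) ^ 2) := by
            rw [Real.sqrt_sq (Finset.sum_nonneg fun j _ =>
              mul_nonneg (abs_nonneg _) (norm_nonneg _))]
        _ ≤ Real.sqrt ((‖g‖ ^ 2) * D) := Real.sqrt_le_sqrt h2
    rw [h1]
    refine h3.trans ?_
    rw [Real.sqrt_mul (sq_nonneg _), Real.sqrt_sq (norm_nonneg _), mul_comm]
  have hsummable : Summable fun j => ‖⟪b j, g⟫ • T (b j)‖ :=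
    summable_of_sum_le (fun j => norm_nonneg _) hpartial
  have hTg : HasSum (fun j => ⟪b j, g⟫ • T (b j)) (T g) := by
    have := (b.hasSum_repr g).mapL T
    convert this using 2 with j
    rw [T.map_smul, b.repr_apply_apply]
  calc ‖T g‖ = ‖∑' j, ⟪b j, g⟫ • T (b j)‖ := by rw [hTg.tsum_eq]
    _ ≤ ∑' j, ‖⟪b j, g⟫ • T (b j)‖ := norm_tsum_le_tsum_norm hsummable
    _ ≤ Real.sqrt D * ‖g‖ := Summable.tsum_le_of_sum_le hsummable hpartial

/-- For the integral operator `L₀` of an `L²` kernel which is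
integral-preserving and mixing, with unique normalized fixed point `f₀`, the
operator `Id − L₀*` maps `span{f₀}^⊥` bijectively onto itself with bounded
inverse. -/
theorem adjoint_resolvent_bijective_bounded
    (k₀ : ℝ × ℝ → ℝ) (hk₀L2 : MemLp k₀ 2 ν01)
    (L₀ : Lp ℝ 2 μ01 →L[ℝ] Lp ℝ 2 μ01)
    (hL₀ : ∀ f : Lp ℝ 2 μ01, ∀ᵐ x ∂μ01, (L₀ f) x = ∫ y, k₀ (x, y) * f y ∂μ01)
    (hint : ∀ g : Lp ℝ 2 μ01, ∫ x, (L₀ g) x ∂μ01 = ∫ x, g x ∂μ01)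
    (hmix : ∀ g : Lp ℝ 2 μ01, (∫ x, g x ∂μ01) = 0 →
      Filter.Tendsto (fun n : ℕ => ‖(L₀ ^ n) g‖) Filter.atTop (nhds 0))
    (f₀ : Lp ℝ 2 μ01) (hf₀fix : L₀ f₀ = f₀) (hf₀int : ∫ x, f₀ x ∂μ01 = 1) :
    (∀ c : Lp ℝ 2 μ01, ⟪c, f₀⟫ = 0 →
      ∃! w : Lp ℝ 2 μ01, ⟪w, f₀⟫ = 0 ∧
        w - (ContinuousLinearMap.adjoint L₀) w = c) ∧
    (∃ M : ℝ, 0 ≤ M ∧ ∀ c w : Lp ℝ 2 μ01,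
      ⟪c, f₀⟫ = 0 → ⟪w, f₀⟫ = 0 →
        w - (ContinuousLinearMap.adjoint L₀) w = c → ‖w‖ ≤ M * ‖c‖) := by
  classical
  -- the constant function 1
  set o : Lp ℝ 2 μ01 := (memLp_const (1:ℝ)).toLp _ with ho_def
  have ho : ⇑o =ᵐ[μ01] fun _ => (1:ℝ) := MemLp.coeFn_toLp _
  have hinner_int : ∀ g : Lp ℝ 2 μ01, ⟪o, g⟫ = ∫ x, g x ∂μ01 := by
    intro g
    rw [L2.inner_def]
    simp only [RCLike.inner_apply, conj_trivial]
    refine integral_congr_ae ?_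
    filter_upwards [ho] with x hx
    rw [hx, mul_one]
  -- integrability of L² functions
  have hInt : ∀ g : Lp ℝ 2 μ01, Integrable (⇑g) μ01 := fun g =>
    (Lp.memLp g).integrable one_le_two
  -- the projection onto mean-zero functions
  set Q : Lp ℝ 2 μ01 →L[ℝ] Lp ℝ 2 μ01 :=
    ContinuousLinearMap.id ℝ (Lp ℝ 2 μ01) - (innerSL ℝ o).smulRight f₀ with hQ_def
  have hQ : ∀ g, Q g = g - ⟪o, g⟫ • f₀ := fun g => rfl
  have hQint : ∀ g : Lp ℝ 2 μ01, ∫ x, (Q g) x ∂μ01 = 0 := by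
    intro g
    have hcoe : ⇑(Q g) =ᵐ[μ01] fun x => g x - ⟪o, g⟫ * f₀ x := by
      rw [hQ]
      filter_upwards [Lp.coeFn_sub g (⟪o, g⟫ • f₀), Lp.coeFn_smul (⟪o, g⟫) f₀] with x h1 h2
      rw [h1, Pi.sub_apply, h2]
      simp [smul_eq_mul]
    rw [integral_congr_ae hcoe, integral_sub (hInt g) ((hInt f₀).const_mul _),
      integral_const_mul, hf₀int, hinner_int, mul_one, sub_self]
  have hQfix : ∀ g : Lp ℝ 2 μ01, (∫ x, g x ∂μ01) = 0 → Q g = g := by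
    intro g hg
    rw [hQ, hinner_int, hg, zero_smul, sub_zero]
  -- powers fix f₀
  have hpowfix : ∀ n : ℕ, (L₀ ^ n) f₀ = f₀ := by
    intro n
    induction n with
    | zero => simp
    | succ n ih => rw [pow_succ, ContinuousLinearMap.mul_apply, hf₀fix, ih]
  set A : ℕ → (Lp ℝ 2 μ01 →L[ℝ] Lp ℝ 2 μ01) := fun n => (L₀ ^ n).comp Q with hA_def
  have hAapp : ∀ n g, A n g = (L₀ ^ n) (Q g) := fun n g => rfl
  have htendA : ∀ g : Lp ℝ 2 μ01,
      Filter.Tendsto (fun n => ‖A n g‖) Filter.atTop (nhds 0) :=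
    fun g => hmix (Q g) (hQint g)
  -- uniform bound via Banach-Steinhaus
  obtain ⟨C₀, hC₀⟩ : ∃ C, ∀ n, ‖A n‖ ≤ C := by
    apply banach_steinhaus
    intro g
    obtain ⟨C, hC⟩ := (htendA g).bddAbove_range
    exact ⟨C, fun n => hC ⟨n, rfl⟩⟩
  set C : ℝ := max C₀ 0 with hC_def
  have hC : ∀ n, ‖A n‖ ≤ C := fun n => (hC₀ n).trans (le_max_left _ _)
  have hCnn : 0 ≤ C := le_max_right _ _
  -- Hilbert basis
  obtain ⟨w₀, b, -⟩ := exists_hilbertBasis ℝ (Lp ℝ 2 μ01)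
  -- the Hilbert–Schmidt bound
  have hk₀L2' : MemLp k₀ 2 (μ01.prod μ01) := hk₀L2
  have hk_asm : AEStronglyMeasurable k₀ (μ01.prod μ01) := hk₀L2'.aestronglyMeasurable
  have hsqInt : Integrable (fun z => (k₀ z) ^ 2) (μ01.prod μ01) :=
    (memLp_two_iff_integrable_sq hk_asm).1 hk₀L2'
  have hgInt : Integrable (fun x => ∫ y, (k₀ (x, y)) ^ 2 ∂μ01) μ01 :=
    hsqInt.integral_prod_left
  have hslice : ∀ᵐ x ∂μ01, MemLp (fun y => k₀ (x, y)) 2 μ01 := by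
    filter_upwards [hk_asm.prodMk_left, hsqInt.prod_right_ae] with x h1 h2
    exact (memLp_two_iff_integrable_sq h1).2 h2
  set κ : ℝ → Lp ℝ 2 μ01 := fun x =>
    if h : MemLp (fun y => k₀ (x, y)) 2 μ01 then h.toLp _ else 0 with hκ_def
  have hκ_prop : ∀ᵐ x ∂μ01,
      (∀ f : Lp ℝ 2 μ01, ⟪κ x, f⟫ = ∫ y, k₀ (x, y) * f y ∂μ01) ∧
      ‖κ x‖ ^ 2 = ∫ y, (k₀ (x, y)) ^ 2 ∂μ01 := by
    filter_upwards [hslice] with x hx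
    have hco : ⇑(κ x) =ᵐ[μ01] fun y => k₀ (x, y) := by
      simp only [hκ_def, dif_pos hx]
      exact MemLp.coeFn_toLp hx
    constructor
    · intro f
      rw [L2.inner_def]
      simp only [RCLike.inner_apply, conj_trivial]
      refine integral_congr_ae ?_
      filter_upwards [hco] with y hy
      rw [hy, mul_comm]
    · rw [← real_inner_self_eq_norm_sq, L2.inner_def]
      simp only [RCLike.inner_apply, conj_trivial]
      refine integral_congr_ae ?_
      filter_upwards [hco] with y hy
      rw [hy, sq]
  have key_f : ∀ f : Lp ℝ 2 μ01, ‖L₀ f‖ ^ 2 = ∫ x, ⟪κ x, f⟫ ^ 2 ∂μ01 := by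
    intro f
    rw [← real_inner_self_eq_norm_sq, L2.inner_def]
    simp only [RCLike.inner_apply, conj_trivial]
    refine integral_congr_ae ?_
    filter_upwards [hL₀ f, hκ_prop] with x h1 h2
    rw [h1, ← h2.1 f, sq]
  have hint_f : ∀ f : Lp ℝ 2 μ01, Integrable (fun x => ⟪κ x, f⟫ ^ 2) μ01 := by
    intro f
    have h1 : Integrable (fun x => ((L₀ f : Lp ℝ 2 μ01) x) ^ 2) μ01 :=
      (memLp_two_iff_integrable_sq (Lp.aestronglyMeasurable (L₀ f))).1 (Lp.memLp _)
    refine h1.congr ?_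
    filter_upwards [hL₀ f, hκ_prop] with x h2 h3
    rw [h2, ← h3.1 f]
  have hHS : ∀ s : Finset w₀, ∑ j ∈ s, ‖L₀ (b j)‖ ^ 2 ≤
      ∫ x, (∫ y, (k₀ (x, y)) ^ 2 ∂μ01) ∂μ01 := by
    intro s
    have hsum_eq : ∑ j ∈ s, ‖L₀ (b j)‖ ^ 2 = ∫ x, ∑ j ∈ s, ⟪κ x, b j⟫ ^ 2 ∂μ01 := by
      rw [integral_finset_sum s (fun j _ => hint_f (b j))]
      exact Finset.sum_congr rfl fun j _ => key_f (b j)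
    rw [hsum_eq]
    refine integral_mono_ae (integrable_finset_sum s (fun j _ => hint_f (b j))) hgInt ?_
    filter_upwards [hκ_prop] with x hx
    have hPar : HasSum (fun j => ⟪κ x, b j⟫ ^ 2) (‖κ x‖ ^ 2) := by
      have := b.hasSum_inner_mul_inner (κ x) (κ x)
      rw [real_inner_self_eq_norm_sq] at this
      have e : (fun j => ⟪κ x, b j⟫ ^ 2) = fun i => ⟪κ x, b i⟫ * ⟪b i, κ x⟫ := by
        funext j
        rw [sq, real_inner_comm (κ x) (b j)]
      rw [e]; exact this
    calc ∑ j ∈ s, ⟪κ x, b j⟫ ^ 2 ≤ ‖κ x‖ ^ 2 :=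
        sum_le_hasSum s (fun i _ => sq_nonneg _) hPar
      _ = ∫ y, (k₀ (x, y)) ^ 2 ∂μ01 := hx.2
  have hSumL : Summable (fun j : w₀ => ‖L₀ (b j)‖ ^ 2) :=
    summable_of_sum_le (fun j => sq_nonneg _) hHS
  -- the quantities Dₙ
  set Dn : ℕ → ℝ := fun n => ∑' j : w₀, ‖A n (L₀ (b j))‖ ^ 2 with hDn_def
  have hterm_le : ∀ n (j : w₀), ‖A n (L₀ (b j))‖ ^ 2 ≤ C ^ 2 * ‖L₀ (b j)‖ ^ 2 := by
    intro n j
    calc ‖A n (L₀ (b j))‖ ^ 2 ≤ (C * ‖L₀ (b j)‖) ^ 2 := by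
          refine pow_le_pow_left₀ (norm_nonneg _) ?_ 2
          exact ((A n).le_opNorm _).trans (by gcongr; exact hC n)
      _ = C ^ 2 * ‖L₀ (b j)‖ ^ 2 := by ring
  have hDn_sum : ∀ n, Summable (fun j : w₀ => ‖A n (L₀ (b j))‖ ^ 2) := fun n =>
    Summable.of_nonneg_of_le (fun j => sq_nonneg _) (hterm_le n) (hSumL.mul_left (C ^ 2))
  have hDn_tend : Filter.Tendsto Dn Filter.atTop (nhds 0) := by
    have h0 : ∀ j : w₀, Filter.Tendsto (fun n => ‖A n (L₀ (b j))‖ ^ 2)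
        Filter.atTop (nhds 0) := by
      intro j
      have := (htendA (L₀ (b j))).pow 2
      simpa using this
    have := tendsto_tsum_of_dominated_convergence
      (f := fun n (j : w₀) => ‖A n (L₀ (b j))‖ ^ 2) (g := fun _ => (0:ℝ))
      (bound := fun j => C ^ 2 * ‖L₀ (b j)‖ ^ 2) (hSumL.mul_left (C ^ 2)) h0
      (Filter.Eventually.of_forall fun n j => by
        rw [Real.norm_eq_abs, abs_of_nonneg (sq_nonneg _)]; exact hterm_le n j)
    simpa using this
  -- pointwise bound for A (n+1)
  have hAsucc : ∀ n (g : Lp ℝ 2 μ01), ‖A (n + 1) g‖ ≤ Real.sqrt (Dn n) * (‖Q‖ * ‖g‖) := by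
    intro n g
    have h1 : A (n + 1) g = ((A n).comp L₀) (Q g) := by
      show (L₀ ^ (n + 1)) (Q g) = (L₀ ^ n) (Q (L₀ (Q g)))
      rw [hQfix (L₀ (Q g)) (by rw [hint, hQint]), pow_succ, ContinuousLinearMap.mul_apply]
    have h2 : ∀ s : Finset w₀, ∑ j ∈ s, ‖((A n).comp L₀) (b j)‖ ^ 2 ≤ Dn n := fun s =>
      sum_le_hasSum s (fun i _ => sq_nonneg _) (hDn_sum n).hasSum
    rw [h1]
    calc ‖((A n).comp L₀) (Q g)‖ ≤ Real.sqrt (Dn n) * ‖Q g‖ :=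
        opnorm_le_of_basis_sq_sum b _ h2 (Q g)
      _ ≤ Real.sqrt (Dn n) * (‖Q‖ * ‖g‖) :=
        mul_le_mul_of_nonneg_left (Q.le_opNorm g) (Real.sqrt_nonneg _)
  -- choose N
  obtain ⟨N', hN'⟩ : ∃ n, Real.sqrt (Dn n) * ‖Q‖ ≤ 1 / 2 := by
    have hQtend : Filter.Tendsto (fun n => Real.sqrt (Dn n) * ‖Q‖)
        Filter.atTop (nhds 0) := by
      have h1 : Filter.Tendsto (fun n => Real.sqrt (Dn n)) Filter.atTop (nhds 0) := by
        have := (Real.continuous_sqrt.tendsto 0).comp hDn_tend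
        simpa [Function.comp_def] using this
      simpa using h1.mul_const ‖Q‖
    exact (hQtend.eventually_le_const (by norm_num : (0:ℝ) < 1/2)).exists
  set N : ℕ := N' + 1 with hN_def
  have hAN : ‖A N‖ ≤ 1 / 2 := by
    refine ContinuousLinearMap.opNorm_le_bound _ (by norm_num) fun g => ?_
    calc ‖A N g‖ ≤ Real.sqrt (Dn N') * (‖Q‖ * ‖g‖) := hAsucc N' g
      _ = (Real.sqrt (Dn N') * ‖Q‖) * ‖g‖ := by ring
      _ ≤ 1 / 2 * ‖g‖ := mul_le_mul_of_nonneg_right hN' (norm_nonneg _)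
  -- the adjoint
  set T : Lp ℝ 2 μ01 →L[ℝ] Lp ℝ 2 μ01 := ContinuousLinearMap.adjoint L₀ with hT_def
  have hadj : ∀ (v g : Lp ℝ 2 μ01), ⟪T v, g⟫ = ⟪v, L₀ g⟫ := fun v g =>
    ContinuousLinearMap.adjoint_inner_left L₀ g v
  have hadj_pow : ∀ (n : ℕ) (v g : Lp ℝ 2 μ01), ⟪(T ^ n) v, g⟫ = ⟪v, (L₀ ^ n) g⟫ := by
    intro n
    induction n with
    | zero => intro v g; simp
    | succ n ih =>
      intro v g
      rw [pow_succ, ContinuousLinearMap.mul_apply, ih (T v) g, hadj,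
        ← ContinuousLinearMap.mul_apply, ← pow_succ']
  -- contraction property on f₀-orthogonal vectors
  have hcontr : ∀ v : Lp ℝ 2 μ01, ⟪v, f₀⟫ = 0 → ∀ n : ℕ, ‖(T ^ n) v‖ ≤ ‖A n‖ * ‖v‖ := by
    intro v hv n
    have heq : (T ^ n) v = ContinuousLinearMap.adjoint (A n) v := by
      apply ext_inner_right ℝ
      intro g
      rw [hadj_pow n v g, ContinuousLinearMap.adjoint_inner_left]
      have hdecomp : (L₀ ^ n) g = A n g + ⟪o, g⟫ • f₀ := by
        rw [hAapp, hQ, map_sub, (L₀ ^ n).map_smul, hpowfix n]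
        abel
      rw [hdecomp, inner_add_right, real_inner_smul_right, hv, mul_zero, add_zero]
    rw [heq]
    calc ‖ContinuousLinearMap.adjoint (A n) v‖
        ≤ ‖ContinuousLinearMap.adjoint (A n)‖ * ‖v‖ :=
        (ContinuousLinearMap.adjoint (A n)).le_opNorm v
      _ = ‖A n‖ * ‖v‖ := by rw [ContinuousLinearMap.adjoint.norm_map (A n)]
  have hTinv : ∀ v : Lp ℝ 2 μ01, ⟪v, f₀⟫ = 0 → ⟪T v, f₀⟫ = 0 := by
    intro v hv
    rw [hT_def, ContinuousLinearMap.adjoint_inner_left, hf₀fix, hv]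
  have hTpowinv : ∀ (n : ℕ) (v : Lp ℝ 2 μ01), ⟪v, f₀⟫ = 0 → ⟪(T ^ n) v, f₀⟫ = 0 := by
    intro n
    induction n with
    | zero => intro v hv; simpa using hv
    | succ n ih =>
      intro v hv
      rw [pow_succ', ContinuousLinearMap.mul_apply]
      exact hTinv _ (ih v hv)
  -- the contraction S = T^N
  set S : Lp ℝ 2 μ01 →L[ℝ] Lp ℝ 2 μ01 := T ^ N with hS_def
  have hScontr : ∀ v : Lp ℝ 2 μ01, ⟪v, f₀⟫ = 0 → ‖S v‖ ≤ 1 / 2 * ‖v‖ := by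
    intro v hv
    refine (hcontr v hv N).trans ?_
    exact mul_le_mul_of_nonneg_right hAN (norm_nonneg _)
  have hSinv : ∀ v : Lp ℝ 2 μ01, ⟪v, f₀⟫ = 0 → ⟪S v, f₀⟫ = 0 := hTpowinv N
  have hSpow : ∀ (q : ℕ) (v : Lp ℝ 2 μ01), ⟪v, f₀⟫ = 0 →
      ⟪(S ^ q) v, f₀⟫ = 0 ∧ ‖(S ^ q) v‖ ≤ (1 / 2) ^ q * ‖v‖ := by
    intro q
    induction q with
    | zero => intro v hv; simp [hv]
    | succ q ih =>
      intro v hv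
      have h1 : (S ^ (q + 1)) v = (S ^ q) (S v) := by
        rw [pow_succ, ContinuousLinearMap.mul_apply]
      obtain ⟨ih1, ih2⟩ := ih (S v) (hSinv v hv)
      refine ⟨by rw [h1]; exact ih1, ?_⟩
      rw [h1]
      calc ‖(S ^ q) (S v)‖ ≤ (1 / 2) ^ q * ‖S v‖ := ih2
        _ ≤ (1 / 2) ^ q * (1 / 2 * ‖v‖) :=
          mul_le_mul_of_nonneg_left (hScontr v hv) (by positivity)
        _ = (1 / 2) ^ (q + 1) * ‖v‖ := by ring
  -- the partial geometric sum P
  set P : Lp ℝ 2 μ01 →L[ℝ] Lp ℝ 2 μ01 := ∑ r ∈ Finset.range N, T ^ r with hP_def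
  have hTP : T * P = P + T ^ N - 1 := by
    rw [hP_def, Finset.mul_sum]
    have h1 : ∀ r : ℕ, T * T ^ r = T ^ (r + 1) := fun r => (pow_succ' T r).symm
    rw [Finset.sum_congr rfl fun r _ => h1 r]
    have h2 : ∑ r ∈ Finset.range (N + 1), T ^ r
        = (∑ r ∈ Finset.range N, T ^ (r + 1)) + T ^ 0 := Finset.sum_range_succ' _ N
    have h3 : ∑ r ∈ Finset.range (N + 1), T ^ r
        = (∑ r ∈ Finset.range N, T ^ r) + T ^ N := Finset.sum_range_succ _ N
    have := h2.symm.trans h3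
    rw [pow_zero] at this
    linear_combination (norm := abel) this
  have hgeom : P - T * P = 1 - T ^ N := by rw [hTP]; abel
  -- the key existence/uniqueness statement
  have key : ∀ c : Lp ℝ 2 μ01, ⟪c, f₀⟫ = 0 →
      ∃ w : Lp ℝ 2 μ01, (⟪w, f₀⟫ = 0 ∧ w - T w = c) ∧ ‖w‖ ≤ 2 * ‖P‖ * ‖c‖ ∧
        ∀ w' : Lp ℝ 2 μ01, ⟪w', f₀⟫ = 0 → w' - T w' = c → w' = w := by
    intro c hc
    have hsum_norm : Summable (fun q => ‖(S ^ q) c‖) := by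
      refine Summable.of_nonneg_of_le (fun q => norm_nonneg _)
        (fun q => (hSpow q c hc).2) ?_
      exact (summable_geometric_of_lt_one (by norm_num) (by norm_num)).mul_right ‖c‖
    have hsummable : Summable (fun q => (S ^ q) c) := hsum_norm.of_norm
    set u : Lp ℝ 2 μ01 := ∑' q, (S ^ q) c with hu_def
    have hu : HasSum (fun q => (S ^ q) c) u := hsummable.hasSum
    have huorth : ⟪u, f₀⟫ = 0 := by
      have h1 := hu.mapL (innerSL ℝ f₀)
      have h2 : (fun q => (innerSL ℝ f₀) ((S ^ q) c)) = fun _ => (0:ℝ) := by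
        funext q
        simp only [innerSL_apply_apply]
        rw [real_inner_comm]
        exact (hSpow q c hc).1
      rw [h2] at h1
      have h3 : (innerSL ℝ f₀) u = 0 := h1.unique hasSum_zero
      rw [real_inner_comm]
      simpa using h3
    have hSu : S u = u - c := by
      have h1 := hu.mapL S
      have h2 : (fun q => S ((S ^ q) c)) = fun q => (S ^ (q + 1)) c := by
        funext q
        rw [pow_succ', ContinuousLinearMap.mul_apply]
      rw [h2] at h1
      have h3 : HasSum (fun q => (S ^ (q + 1)) c)
          (u - ∑ i ∈ Finset.range 1, (S ^ i) c) := (hasSum_nat_add_iff' 1).2 hu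
      simp only [Finset.range_one, Finset.sum_singleton, pow_zero,
        ContinuousLinearMap.one_apply] at h3
      exact h1.unique h3
    refine ⟨P u, ⟨?_, ?_⟩, ?_, ?_⟩
    · -- orthogonality
      rw [hP_def, ContinuousLinearMap.sum_apply, sum_inner]
      exact Finset.sum_eq_zero fun r _ => hTpowinv r u huorth
    · -- solves the equation
      have h4 : P u - T (P u) = (P - T * P) u := by
        rw [ContinuousLinearMap.sub_apply, ContinuousLinearMap.mul_apply]
      rw [h4, hgeom, ContinuousLinearMap.sub_apply, ContinuousLinearMap.one_apply,
        ← hS_def, hSu]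
      abel
    · -- norm bound
      have h5 : ‖u‖ ≤ 2 * ‖c‖ := by
        calc ‖u‖ = ‖∑' q, (S ^ q) c‖ := by rw [hu_def]
          _ ≤ ∑' q, ‖(S ^ q) c‖ := norm_tsum_le_tsum_norm hsum_norm
          _ ≤ ∑' q : ℕ, (1 / 2) ^ q * ‖c‖ := Summable.tsum_le_tsum (fun q => (hSpow q c hc).2)
              hsum_norm ((summable_geometric_of_lt_one (by norm_num) (by norm_num)).mul_right _)
          _ = (∑' q : ℕ, (1 / 2 : ℝ) ^ q) * ‖c‖ := tsum_mul_right
          _ = 2 * ‖c‖ := by rw [tsum_geometric_of_lt_one (by norm_num) (by norm_num)]; norm_num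
      calc ‖P u‖ ≤ ‖P‖ * ‖u‖ := P.le_opNorm u
        _ ≤ ‖P‖ * (2 * ‖c‖) := mul_le_mul_of_nonneg_left h5 (norm_nonneg _)
        _ = 2 * ‖P‖ * ‖c‖ := by ring
    · -- uniqueness
      intro w' hw' hw'eq
      have hd_orth : ⟪w' - P u, f₀⟫ = 0 := by
        rw [inner_sub_left, hw']
        rw [hP_def, ContinuousLinearMap.sum_apply, sum_inner,
          Finset.sum_eq_zero fun r _ => hTpowinv r u huorth]
        ring
      have hPu_eq : P u - T (P u) = c := by
        have h4 : P u - T (P u) = (P - T * P) u := by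
          rw [ContinuousLinearMap.sub_apply, ContinuousLinearMap.mul_apply]
        rw [h4, hgeom, ContinuousLinearMap.sub_apply, ContinuousLinearMap.one_apply,
          ← hS_def, hSu]
        abel
      have hd : w' - P u = T (w' - P u) := by
        have h9 : w' - T w' = P u - T (P u) := hw'eq.trans hPu_eq.symm
        rw [map_sub]
        exact sub_eq_sub_iff_sub_eq_sub.1 h9
      have hd_pow : ∀ n : ℕ, w' - P u = (T ^ n) (w' - P u) := by
        intro n
        induction n with
        | zero => simp
        | succ n ih =>
          rw [pow_succ', ContinuousLinearMap.mul_apply, ← ih, ← hd]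
      have hzero : w' - P u = 0 := by
        have h6 : ‖w' - P u‖ ≤ 1 / 2 * ‖w' - P u‖ := by
          calc ‖w' - P u‖ = ‖S (w' - P u)‖ := by rw [hS_def, ← hd_pow N]
            _ ≤ 1 / 2 * ‖w' - P u‖ := hScontr _ hd_orth
        have := norm_nonneg (w' - P u)
        have h7 : ‖w' - P u‖ = 0 := by linarith
        exact norm_eq_zero.1 h7
      exact sub_eq_zero.1 hzero
  constructor
  · intro c hc
    obtain ⟨w, hw, _, huniq⟩ := key c hc
    exact ⟨w, hw, fun y hy => huniq y hy.1 hy.2⟩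
  · refine ⟨2 * ‖P‖, by positivity, fun c w hc hw hweq => ?_⟩
    obtain ⟨w₁, _, hb, huniq⟩ := key c hc
    rw [huniq w hw hweq]
    exact hb
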